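/- Let H→ be an acyclic orientation of a simple graph H with source set S, and let S_p ⊆ S. If the unique reachability graph UR_{S_p} contains a cycle of length ℓ (where ℓ ≥ 3), then H contains an induced cycle of length at least 2ℓ. -/

import Mathlib

/-- An acyclic orientation of a simple graph `H`: a relation `D` directing every
edge of `H` (and nothing else) with no directed cycle. -/
structure GraphOrientation {V : Type} (H : SimpleGraph V) : Type where
  D : V → V → Prop
  adj_of_rel : ∀ u v, D u v → H.Adj u v
  rel_of_adj : ∀ u v, H.Adj u v → D u v ∨ D v u
  acyclic : ∀ v, ¬ Relation.TransGen D v v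

namespace GraphOrientation

variable {V : Type} {H : SimpleGraph V}

/-- The set of sources of an acyclic orientation: vertices with no incoming edge. -/
def sources (O : GraphOrientation H) : Set V := {s | ∀ u, ¬ O.D u s}

/-- The set of vertices reachable from `s` by a directed path (including `s`). -/
def reach (O : GraphOrientation H) (s : V) : Set V := {v | Relation.ReflTransGen O.D s v}

/-- The set of vertices reachable from some vertex of `B`. -/
def reachSet (O : GraphOrientation H) (B : Set V) : Set V := ⋃ s ∈ B, O.reach s

end GraphOrientation

/-- `tree` together with the bag assignment `bag` is a (partial) DAG tree
decomposition of the orientation `O` with respect to the vertex set `Sp`: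
a finite tree whose bags are subsets of `Sp` whose union is `Sp`, such that
whenever a node `j` lies on the (unique) path between nodes `i` and `k`,
`reach(bag i) ∩ reach(bag k) ⊆ reach(bag j)`.
Taking `Sp = O.sources` gives the notion of a DAG tree decomposition of `O`. -/
def IsPDTD {V : Type} {H : SimpleGraph V} (O : GraphOrientation H) (Sp : Set V)
    {ι : Type} (tree : SimpleGraph ι) (bag : ι → Set V) : Prop :=
  Finite ι ∧ tree.IsTree ∧ (∀ i, bag i ⊆ Sp) ∧ (⋃ i, bag i) = Sp ∧
    ∀ (i j k : ι) (p : tree.Walk i k), p.IsPath → j ∈ p.support →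
      O.reachSet (bag i) ∩ O.reachSet (bag k) ⊆ O.reachSet (bag j)

/-- The width of a bag assignment: the maximum bag size. -/
noncomputable def bagWidth {V ι : Type} (bag : ι → Set V) : ℕ := ⨆ i, (bag i).ncard

/-- A width-one (partial) DAG tree decomposition: every bag is a singleton, and
distinct nodes carry distinct bags (so nodes may be identified with sources). -/
def IsWidthOnePDTD {V : Type} {H : SimpleGraph V} (O : GraphOrientation H) (Sp : Set V)
    {ι : Type} (tree : SimpleGraph ι) (bag : ι → Set V) : Prop :=
  IsPDTD O Sp tree bag ∧ Function.Injective bag ∧ ∀ i, ∃ s : V, bag i = {s}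

/-- `H` contains an induced cycle of length `n`. -/
def HasInducedCycleOfLength {V : Type} (H : SimpleGraph V) (n : ℕ) : Prop :=
  Nonempty (SimpleGraph.cycleGraph n ↪g H)

/-- The unique reachability graph of an orientation `O` over a set `Sp` of sources:
`s₁` and `s₂` are adjacent iff some vertex is reachable from both `s₁` and `s₂`
but from no other member of `Sp`. -/
def URGraph {V : Type} {H : SimpleGraph V} (O : GraphOrientation H) (Sp : Set V) :
    SimpleGraph V where
  Adj s₁ s₂ := s₁ ∈ Sp ∧ s₂ ∈ Sp ∧ s₁ ≠ s₂ ∧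
    ((O.reach s₁ ∩ O.reach s₂) \ O.reachSet (Sp \ {s₁, s₂})).Nonempty
  symm := ⟨by
    rintro a b ⟨ha, hb, hab, hx⟩
    refine ⟨hb, ha, hab.symm, ?_⟩
    rwa [Set.inter_comm (O.reach b) (O.reach a), Set.pair_comm b a]⟩
  loopless := ⟨by
    rintro a ⟨-, -, h, -⟩
    exact h rfl⟩

/-- `(x, (tree, bag))` is a good pair: some leaf `ℓ` of the width-one decomposition,
with unique neighbour `d`, satisfies `reach x ∩ reach ℓ ⊆ reach d`. -/
def GoodPair {V : Type} {H : SimpleGraph V} (O : GraphOrientation H)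
    {ι : Type} (tree : SimpleGraph ι) (bag : ι → Set V) (x : V) : Prop :=
  ∃ (i j : ι) (l d : V), tree.neighborSet i = {j} ∧ bag i = {l} ∧ bag j = {d} ∧
    O.reach x ∩ O.reach l ⊆ O.reach d


set_option linter.unusedSectionVars false

namespace IndCyc

open SimpleGraph Walk

variable {W : Type*} {G : SimpleGraph W}

/-- The step of the potential function along an edge. -/
def stp {m : ℕ} (p : W → ZMod m) (u v : W) : ℤ :=
  if p v - p u = 1 then 1 else if p v - p u = -1 then -1 else 0

/-- The winding number of a walk with respect to a potential `p`. -/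
def wind {m : ℕ} (p : W → ZMod m) : {a b : W} → G.Walk a b → ℤ
  | _, _, .nil => 0
  | a, _, .cons (v := v) _ w => stp p a v + wind p w

@[simp] lemma wind_nil {m : ℕ} (p : W → ZMod m) (a : W) :
    wind p (Walk.nil : G.Walk a a) = 0 := rfl

@[simp] lemma wind_cons {m : ℕ} (p : W → ZMod m) {a b c : W} (h : G.Adj a b)
    (w : G.Walk b c) : wind p (Walk.cons h w) = stp p a b + wind p w := rfl

@[simp] lemma wind_copy {m : ℕ} (p : W → ZMod m) {a b a' b' : W} (w : G.Walk a b)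
    (ha : a = a') (hb : b = b') : wind p (w.copy ha hb) = wind p w := by
  subst ha; subst hb; rfl

@[simp] lemma wind_append {m : ℕ} (p : W → ZMod m) {a b c : W} (w₁ : G.Walk a b)
    (w₂ : G.Walk b c) : wind p (w₁.append w₂) = wind p w₁ + wind p w₂ := by
  induction w₁ with
  | nil => simp
  | cons h w ih => simp [ih]; ring

lemma natCast_inj_of_lt {m a b : ℕ} (ha : a < m) (hb : b < m)
    (h : (a : ZMod m) = b) : a = b := by
  haveI : NeZero m := ⟨by omega⟩
  have := congrArg ZMod.val h
  rwa [ZMod.val_cast_of_lt ha, ZMod.val_cast_of_lt hb] at this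

lemma one_ne_zero' {m : ℕ} (hm : 3 ≤ m) : (1 : ZMod m) ≠ 0 := by
  intro h
  have : ((1 : ℕ) : ZMod m) = ((0 : ℕ) : ZMod m) := by push_cast; exact h
  have := natCast_inj_of_lt (by omega) (by omega) this
  omega

lemma two_ne_zero' {m : ℕ} (hm : 3 ≤ m) : (2 : ZMod m) ≠ 0 := by
  intro h
  have : ((2 : ℕ) : ZMod m) = ((0 : ℕ) : ZMod m) := by push_cast; exact h
  have := natCast_inj_of_lt (by omega) (by omega) this
  omega

lemma one_ne_negone {m : ℕ} (hm : 3 ≤ m) : (1 : ZMod m) ≠ -1 := by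
  intro h
  apply two_ne_zero' hm
  linear_combination h

lemma stp_eq_one {m : ℕ} {p : W → ZMod m} {u v : W} (h : p v - p u = 1) :
    stp p u v = 1 := by
  unfold stp; rw [if_pos h]

lemma stp_eq_negone {m : ℕ} (hm : 3 ≤ m) {p : W → ZMod m} {u v : W}
    (h : p v - p u = -1) : stp p u v = -1 := by
  unfold stp
  rw [if_neg (by rw [h]; exact fun hc => one_ne_negone hm hc.symm), if_pos h]

lemma stp_eq_zero {m : ℕ} (hm : 3 ≤ m) {p : W → ZMod m} {u v : W}
    (h : p v - p u = 0) : stp p u v = 0 := by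
  unfold stp
  rw [if_neg (by rw [h]; exact fun hc => one_ne_zero' hm hc.symm),
    if_neg (by rw [h]; intro hc; apply one_ne_zero' hm; linear_combination hc)]

lemma stp_antisymm {m : ℕ} (hm : 3 ≤ m) (p : W → ZMod m) (u v : W) :
    stp p u v = - stp p v u := by
  have h1 : p u - p v = -(p v - p u) := by ring
  rcases eq_or_ne (p v - p u) 1 with h | h
  · rw [stp_eq_one h, stp_eq_negone hm (by rw [h1, h])]; ring
  · rcases eq_or_ne (p v - p u) (-1) with h' | h'
    · rw [stp_eq_negone hm h', stp_eq_one (by rw [h1, h']; ring)]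
    · have e0 : ¬ (p v - p u = 1) := h
      unfold stp
      rw [if_neg e0, if_neg h', if_neg, if_neg]
      · ring
      · rw [h1]; intro hc; apply h; linear_combination -hc
      · rw [h1]; intro hc; apply h'; linear_combination -hc

lemma wind_reverse {m : ℕ} (hm : 3 ≤ m) (p : W → ZMod m) {a b : W}
    (w : G.Walk a b) : wind p w.reverse = - wind p w := by
  induction w with
  | nil => simp
  | cons h w ih =>
    rw [Walk.reverse_cons, wind_append, ih, wind_cons, wind_cons, wind_nil,
      stp_antisymm hm p _ _]
    ring

lemma abs_stp_le_one {m : ℕ} (p : W → ZMod m) (u v : W) : |stp p u v| ≤ 1 := by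
  unfold stp
  split_ifs <;> simp

lemma abs_wind_le_length {m : ℕ} (p : W → ZMod m) {a b : W} (w : G.Walk a b) :
    |wind p w| ≤ w.length := by
  induction w with
  | @cons a c b h w ih =>
    rw [wind_cons, Walk.length_cons]
    calc |stp p a c + wind p w| ≤ |stp p a c| + |wind p w| := abs_add_le _ _
    _ ≤ 1 + w.length := add_le_add (abs_stp_le_one p _ _) ih
    _ = (w.length + 1 : ℕ) := by push_cast; ring
  | nil => simp

lemma cast_wind {m : ℕ} (hm : 3 ≤ m) (p : W → ZMod m) {a b : W} (w : G.Walk a b)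
    (hw : ∀ u v, u ∈ w.support → v ∈ w.support → G.Adj u v →
      p v - p u = 1 ∨ p v - p u = -1 ∨ p v - p u = 0) :
    ((wind p w : ℤ) : ZMod m) = p b - p a := by
  induction w with
  | nil => simp
  | @cons a c b h w ih =>
    have hstep : ((stp p a c : ℤ) : ZMod m) = p c - p a := by
      rcases hw a c (by simp) (by simp [Walk.support_cons]) h with h1 | h1 | h1
      · rw [stp_eq_one h1, h1]; norm_num
      · rw [stp_eq_negone hm h1, h1]; push_cast; ring
      · rw [stp_eq_zero hm h1, h1]; norm_num
    have ih' := ih (fun u v hu hv hadj => hw u v (by simp [Walk.support_cons, hu])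
      (by simp [Walk.support_cons, hv]) hadj)
    rw [wind_cons]
    push_cast
    push_cast at ih' hstep
    rw [hstep, ih']
    ring


lemma support_eq_map {a b : W} (w : G.Walk a b) :
    w.support = (List.range (w.length + 1)).map w.getVert := by
  induction w with
  | nil => rfl
  | @cons a c b h w ih =>
    have hr : (List.range (w.length + 1 + 1)).map (Walk.cons h w).getVert
        = a :: (List.range (w.length + 1)).map w.getVert := by
      rw [List.range_succ_eq_map, List.map_cons, List.map_map]
      congr 1
    rw [Walk.support_cons, Walk.length_cons, ih, hr]

lemma edges_eq_map {a b : W} (w : G.Walk a b) :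
    w.edges = (List.range w.length).map (fun i => s(w.getVert i, w.getVert (i + 1))) := by
  induction w with
  | nil => simp
  | @cons a c b h w ih =>
    have hr : (List.range (w.length + 1)).map
          (fun i => s((Walk.cons h w).getVert i, (Walk.cons h w).getVert (i + 1)))
        = s(a, c) :: (List.range w.length).map
            (fun i => s(w.getVert i, w.getVert (i + 1))) := by
      rw [List.range_succ_eq_map, List.map_cons, List.map_map]
      congr 1
      simp [Walk.getVert_zero, Walk.getVert_cons_succ, Walk.getVert_cons_succ (n := 0)]
    rw [Walk.edges_cons, Walk.length_cons, ih, hr]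

/-- In a closed walk whose support tail has no duplicates, `getVert` is injective
below the length. -/
lemma getVert_inj {a : W} (w : G.Walk a a) (hnd : w.support.tail.Nodup)
    {i j : ℕ} (hi : i < w.length) (hj : j < w.length) (h : w.getVert i = w.getVert j) :
    i = j := by
  have hs : w.support.tail = (List.range w.length).map (fun k => w.getVert (k + 1)) := by
    have := support_eq_map w
    rw [List.range_succ_eq_map] at this
    rw [this]
    simp [List.map_map, Function.comp]
  rw [hs] at hnd
  have key : ∀ i' j' : ℕ, i' < w.length → j' < w.length → i' ≠ j' →
      w.getVert (i' + 1) ≠ w.getVert (j' + 1) := by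
    intro i' j' hi' hj' hne
    have := (List.nodup_map_iff_inj_on List.nodup_range).mp hnd i'
      (List.mem_range.mpr hi') j' (List.mem_range.mpr hj')
    intro hc
    exact hne (this hc)
  by_contra hne
  rcases Nat.eq_zero_or_pos i with hi0 | hipos
  · subst hi0
    rcases Nat.eq_zero_or_pos j with hj0 | hjpos
    · exact hne (by omega)
    · -- getVert 0 = getVert j, j ≥ 1; but getVert 0 = getVert length
      have h0 : w.getVert 0 = w.getVert w.length := by
        rw [Walk.getVert_zero, Walk.getVert_length]
      have : w.getVert ((w.length - 1) + 1) = w.getVert ((j - 1) + 1) := by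
        have e1 : w.length - 1 + 1 = w.length := by omega
        have e2 : j - 1 + 1 = j := by omega
        rw [e1, e2, ← h0, h]
      exact key (w.length - 1) (j - 1) (by omega) (by omega) (by omega) this
  · rcases Nat.eq_zero_or_pos j with hj0 | hjpos
    · subst hj0
      have h0 : w.getVert 0 = w.getVert w.length := by
        rw [Walk.getVert_zero, Walk.getVert_length]
      have : w.getVert ((i - 1) + 1) = w.getVert ((w.length - 1) + 1) := by
        have e1 : w.length - 1 + 1 = w.length := by omega
        have e2 : i - 1 + 1 = i := by omega
        rw [e1, e2, ← h0, h]
      exact key (i - 1) (w.length - 1) (by omega) (by omega) (by omega) this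
    · have : w.getVert ((i - 1) + 1) = w.getVert ((j - 1) + 1) := by
        have e1 : i - 1 + 1 = i := by omega
        have e2 : j - 1 + 1 = j := by omega
        rw [e1, e2, h]
      exact key (i - 1) (j - 1) (by omega) (by omega) (by omega) this


lemma embed_of_nodup_chordfree {a : W} (w : G.Walk a a) (h3 : 3 ≤ w.length)
    (hnd : w.support.tail.Nodup)
    (hch : ∀ u v, u ∈ w.support → v ∈ w.support → G.Adj u v → s(u, v) ∈ w.edges) :
    Nonempty (SimpleGraph.cycleGraph w.length ↪g G) := by
  haveI : NeZero w.length := ⟨by intro h; rw [h] at h3; omega⟩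
  have hone : (1 : Fin w.length).val = 1 := by
    rw [Fin.val_one']
    exact Nat.mod_eq_of_lt (by omega)
  set f : Fin w.length → W := fun i => w.getVert i.val with hf
  have finj : Function.Injective f := by
    intro i j hij
    exact Fin.ext (getVert_inj w hnd i.isLt j.isLt hij)
  have hsucc : ∀ i : Fin w.length, f (i + 1) = w.getVert (i.val + 1) := by
    intro i
    show w.getVert ((i + 1).val) = w.getVert (i.val + 1)
    have hval : ((i + 1 : Fin w.length)).val = (i.val + 1) % w.length := by
      rw [Fin.add_def, hone]
    rcases Nat.lt_or_ge (i.val + 1) w.length with hlt | hge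
    · rw [hval, Nat.mod_eq_of_lt hlt]
    · have he : i.val + 1 = w.length := by have := i.isLt; omega
      have hz : ((i + 1 : Fin w.length)).val = 0 := by
        rw [hval, he, Nat.mod_self]
      rw [hz, Walk.getVert_zero, he, Walk.getVert_length]
  have hadjf : ∀ i : Fin w.length, G.Adj (f i) (f (i + 1)) := by
    intro i
    rw [hsucc]
    exact w.adj_getVert_succ i.isLt
  have hmem : ∀ i : Fin w.length, f i ∈ w.support := by
    intro i
    rw [support_eq_map]
    exact List.mem_map_of_mem (List.mem_range.mpr (by have := i.isLt; omega))
  have hiff : ∀ i j : Fin w.length, G.Adj (f i) (f j) ↔ (SimpleGraph.cycleGraph w.length).Adj i j := by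
    intro i j
    constructor
    · intro hadj
      have hedge := hch _ _ (hmem i) (hmem j) hadj
      rw [edges_eq_map] at hedge
      rcases List.mem_map.mp hedge with ⟨k, hk, hkeq⟩
      rw [List.mem_range] at hk
      set k' : Fin w.length := ⟨k, hk⟩ with hk'
      have e1 : w.getVert k = f k' := rfl
      have e2 : w.getVert (k + 1) = f (k' + 1) := (hsucc k').symm
      rw [e1, e2] at hkeq
      rw [SimpleGraph.cycleGraph_adj']
      rcases Sym2.eq_iff.mp hkeq.symm with ⟨hik, hjk⟩ | ⟨hik, hjk⟩
      · have hi' : i = k' := finj hik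
        have hj' : j = k' + 1 := finj hjk
        right
        rw [hi', hj']
        have : k' + 1 - k' = 1 := add_sub_cancel_left _ _
        rw [this, hone]
      · have hi' : i = k' + 1 := finj hik
        have hj' : j = k' := finj hjk
        left
        rw [hi', hj']
        have : k' + 1 - k' = 1 := add_sub_cancel_left _ _
        rw [this, hone]
    · intro hadj
      rw [SimpleGraph.cycleGraph_adj'] at hadj
      rcases hadj with h1 | h1
      · have h2 : i - j = 1 := Fin.ext (by rw [hone]; exact h1)
        have h3' : i = j + 1 := by
          have := eq_add_of_sub_eq h2
          rw [this, add_comm]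
        rw [h3']
        exact (hadjf j).symm
      · have h2 : j - i = 1 := Fin.ext (by rw [hone]; exact h1)
        have h3' : j = i + 1 := by
          have := eq_add_of_sub_eq h2
          rw [this, add_comm]
        rw [h3']
        exact hadjf i
  exact ⟨⟨⟨f, finj⟩, fun {i j} => hiff i j⟩⟩


open scoped Classical in
/-- Winding of a walk staying on two adjacent levels `c`, `c+1` of the potential. -/
lemma wind_two_levels {m : ℕ} (hm : 3 ≤ m) (p : W → ZMod m) (c : ZMod m) {a b : W}
    (w : G.Walk a b) (hsup : ∀ z ∈ w.support, p z = c ∨ p z = c + 1) :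
    wind p w = (if p b = c + 1 then 1 else 0) - (if p a = c + 1 then 1 else 0) := by
  have hcc : c ≠ c + 1 := by
    intro h
    exact one_ne_zero' hm (by linear_combination -h)
  induction w with
  | nil => simp
  | @cons a y b h w ih =>
    have ha := hsup a (by simp)
    have hy := hsup y (by simp [Walk.support_cons])
    have ih' := ih (fun z hz => hsup z (by simp [Walk.support_cons, hz]))
    rw [wind_cons, ih']
    rcases ha with ha | ha <;> rcases hy with hy | hy
    · have hxa : (if p a = c + 1 then (1:ℤ) else 0) = 0 := if_neg (by rw [ha]; exact hcc)
      have hxy : (if p y = c + 1 then (1:ℤ) else 0) = 0 := if_neg (by rw [hy]; exact hcc)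
      rw [stp_eq_zero hm (by rw [ha, hy]; ring), hxa, hxy]
      ring
    · have hxa : (if p a = c + 1 then (1:ℤ) else 0) = 0 := if_neg (by rw [ha]; exact hcc)
      have hxy : (if p y = c + 1 then (1:ℤ) else 0) = 1 := if_pos hy
      rw [stp_eq_one (by rw [ha, hy]; ring), hxa, hxy]
      ring
    · have hxa : (if p a = c + 1 then (1:ℤ) else 0) = 1 := if_pos ha
      have hxy : (if p y = c + 1 then (1:ℤ) else 0) = 0 := if_neg (by rw [hy]; exact hcc)
      rw [stp_eq_negone hm (by rw [ha, hy]; ring), hxa, hxy]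
      ring
    · have hxa : (if p a = c + 1 then (1:ℤ) else 0) = 1 := if_pos ha
      have hxy : (if p y = c + 1 then (1:ℤ) else 0) = 1 := if_pos hy
      rw [stp_eq_zero hm (by rw [ha, hy]; ring), hxa, hxy]
      ring


variable [DecidableEq W]

lemma length_rotate {a u : W} (w : G.Walk a a) (h : u ∈ w.support) :
    (w.rotate u h).length = w.length := by
  have hspec := congrArg Walk.length (w.take_spec h)
  rw [Walk.length_append] at hspec
  simp only [Walk.rotate, Walk.length_append]
  omega

lemma wind_rotate {m : ℕ} (p : W → ZMod m) {a u : W} (w : G.Walk a a)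
    (h : u ∈ w.support) : wind p (w.rotate u h) = wind p w := by
  conv_rhs => rw [← w.take_spec h]
  simp only [Walk.rotate]
  rw [wind_append, wind_append]
  ring

lemma support_rotate_subset {a u : W} (w : G.Walk a a) (h : u ∈ w.support) :
    ∀ z ∈ (w.rotate u h).support, z ∈ w.support := by
  intro z hz
  simp only [Walk.rotate] at hz
  rw [Walk.mem_support_append_iff] at hz
  rcases hz with hz | hz
  · exact w.support_dropUntil_subset h hz
  · exact w.support_takeUntil_subset h hz

lemma mem_tail_support_of_closed {a : W} (w : G.Walk a a) (hnil : 0 < w.length)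
    {z : W} (hz : z ∈ w.support) : z ∈ w.support.tail := by
  have hs := support_eq_map w
  have ht : w.support.tail = (List.range w.length).map (fun k => w.getVert (k + 1)) := by
    rw [hs, List.range_succ_eq_map]
    simp [List.map_map, Function.comp]
  rw [hs] at hz
  rcases List.mem_map.mp hz with ⟨k, hk, hkz⟩
  rw [List.mem_range] at hk
  rw [ht]
  rcases Nat.eq_zero_or_pos k with hk0 | hkpos
  · refine List.mem_map.mpr ⟨w.length - 1, List.mem_range.mpr (by omega), ?_⟩
    have : w.length - 1 + 1 = w.length := by omega
    rw [this, Walk.getVert_length, ← hkz, hk0, Walk.getVert_zero]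
  · refine List.mem_map.mpr ⟨k - 1, List.mem_range.mpr (by omega), ?_⟩
    have : k - 1 + 1 = k := by omega
    rw [this, hkz]

lemma split_dup {m : ℕ} (p : W → ZMod m) {a : W} (w : G.Walk a a)
    (hnd : ¬ w.support.tail.Nodup) :
    ∃ (b : W) (w₁ w₂ : G.Walk b b), w₁.length < w.length ∧ w₂.length < w.length ∧
      (∀ z ∈ w₁.support, z ∈ w.support) ∧ (∀ z ∈ w₂.support, z ∈ w.support) ∧
      wind p w₁ + wind p w₂ = wind p w := by
  classical
  obtain ⟨v, hv2⟩ : ∃ v, 2 ≤ w.support.tail.count v := by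
    by_contra h
    push_neg at h
    exact hnd (List.nodup_iff_count_le_one.mpr (fun v => by have := h v; omega))
  have hvtail : v ∈ w.support.tail := List.count_pos_iff.mp (by omega)
  have hvsup : v ∈ w.support := List.mem_of_mem_tail hvtail
  have hlenw' : (w.rotate v hvsup).length = w.length := length_rotate w hvsup
  have hwindw' : wind p (w.rotate v hvsup) = wind p w := wind_rotate p w hvsup
  have hw'sub := support_rotate_subset w hvsup
  have hcount' : 2 ≤ (w.rotate v hvsup).support.tail.count v := by
    rw [(w.support_rotate v hvsup).perm.count_eq]
    exact hv2
  have hwpos : 0 < w.length := by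
    by_contra hw0
    push_neg at hw0
    interval_cases hl : w.length
    · have := congrArg List.length (support_eq_map w)
      rw [Walk.length_support] at this
      have h1 : w.support.tail.length = w.length := by
        have := w.length_support
        have h2 : w.support.tail.length = w.support.length - 1 := by
          simp [List.length_tail]
        omega
      rw [hl] at h1
      rw [List.length_eq_zero_iff.mp h1] at hvtail
      simp at hvtail
  have hnil : ¬ (w.rotate v hvsup).Nil := by
    rw [Walk.not_nil_iff_lt_length, hlenw']
    exact hwpos
  set w' := w.rotate v hvsup with hw'
  set r := w'.tail with hrdef
  have hconsr : Walk.cons (w'.adj_snd hnil) r = w' := w'.cons_tail_eq hnil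
  have hrsup : w'.support.tail = r.support := by
    conv_lhs => rw [← hconsr]
    rw [Walk.support_cons, List.tail_cons]
  have hrcount : 2 ≤ r.support.count v := by
    rw [← hrsup]; exact hcount'
  have hvr : v ∈ r.support := List.count_pos_iff.mp (by omega)
  have hspec : (r.takeUntil v hvr).append (r.dropUntil v hvr) = r := r.take_spec hvr
  set t := r.takeUntil v hvr with htdef
  set d := r.dropUntil v hvr with hddef
  have hcount_t : t.support.count v = 1 := r.count_support_takeUntil_eq_one hvr
  have hsplitsup : r.support = t.support ++ d.support.tail := by
    conv_lhs => rw [← hspec]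
    rw [Walk.support_append]
  have hdcount : 1 ≤ d.support.tail.count v := by
    have h2 := hrcount
    rw [hsplitsup, List.count_append, hcount_t] at h2
    omega
  have hdlen : 0 < d.length := by
    have hne : d.support.tail ≠ [] := by
      intro h0
      rw [h0] at hdcount
      simp at hdcount
    have h1 : d.support.tail.length = d.length := by
      have := d.length_support
      have h2 : d.support.tail.length = d.support.length - 1 := by simp [List.length_tail]
      omega
    have := List.length_pos_iff.mpr hne
    omega
  have hlens : t.length + d.length = r.length := by
    have := congrArg Walk.length hspec
    rwa [Walk.length_append] at this
  have hrlen : r.length + 1 = w.length := by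
    have := Walk.length_tail_add_one hnil
    rw [← hrdef] at this
    omega
  refine ⟨v, Walk.cons (w'.adj_snd hnil) t, d, ?_, ?_, ?_, ?_, ?_⟩
  · rw [Walk.length_cons]; omega
  · omega
  · intro z hz
    rw [Walk.support_cons] at hz
    rcases List.mem_cons.mp hz with hz | hz
    · rw [hz]; exact hvsup
    · apply hw'sub
      apply List.mem_of_mem_tail
      rw [hrsup]
      exact r.support_takeUntil_subset hvr hz
  · intro z hz
    apply hw'sub
    apply List.mem_of_mem_tail
    rw [hrsup]
    exact r.support_dropUntil_subset hvr hz
  · have hwr : wind p r = wind p t + wind p d := by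
      conv_lhs => rw [← hspec]
      rw [wind_append]
    have : wind p w' = stp p v (w'.getVert 1) + wind p r := by
      conv_lhs => rw [← hconsr]
      rw [wind_cons]
    rw [wind_cons, ← hwindw', this, hwr]
    ring

lemma split_chord {m : ℕ} (hm : 3 ≤ m) (p : W → ZMod m) {a u v : W} (w : G.Walk a a)
    (hu : u ∈ w.support) (hv : v ∈ w.support) (hadj : G.Adj u v)
    (hedge : s(u, v) ∉ w.edges) :
    ∃ (b : W) (w₁ w₂ : G.Walk b b), w₁.length < w.length ∧ w₂.length < w.length ∧
      (∀ z ∈ w₁.support, z ∈ w.support) ∧ (∀ z ∈ w₂.support, z ∈ w.support) ∧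
      wind p w₁ + wind p w₂ = wind p w := by
  have hne : u ≠ v := G.ne_of_adj hadj
  have hwpos : 0 < w.length := by
    by_contra h0
    push_neg at h0
    have : w.length = 0 := by omega
    have hnil : w = Walk.nil := Walk.nil_iff_eq_nil.mp (Walk.length_eq_zero_iff.mp this)
    rw [hnil] at hu hv
    simp [Walk.support_nil] at hu hv
    rw [hu, hv] at hne
    exact hne rfl
  set w' := w.rotate u hu with hw'
  have hlenw' : w'.length = w.length := length_rotate w hu
  have hwindw' : wind p w' = wind p w := wind_rotate p w hu
  have hw'sub := support_rotate_subset w hu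
  have hv' : v ∈ w'.support := by
    apply List.mem_of_mem_tail
    rw [(w.support_rotate u hu).perm.mem_iff]
    exact mem_tail_support_of_closed w hwpos hv
  have hedge' : s(u, v) ∉ w'.edges := by
    rw [(w.rotate_edges u hu).perm.mem_iff]
    exact hedge
  have hspec : (w'.takeUntil v hv').append (w'.dropUntil v hv') = w' := w'.take_spec hv'
  set t := w'.takeUntil v hv' with htdef
  set d := w'.dropUntil v hv' with hddef
  have hlens : t.length + d.length = w.length := by
    have := congrArg Walk.length hspec
    rw [Walk.length_append] at this
    omega
  have htlen : 2 ≤ t.length := by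
    rcases Nat.lt_or_ge t.length 2 with h2 | h2
    · interval_cases h3 : t.length
      · exact absurd (Walk.eq_of_length_eq_zero h3) hne
      · exfalso
        apply hedge'
        apply w'.edges_takeUntil_subset hv'
        rw [edges_eq_map t, h3]
        have e0 : t.getVert 0 = u := t.getVert_zero
        have e1 : t.getVert 1 = v := by
          have := t.getVert_length
          rwa [h3] at this
        simp [e0, e1]
    · exact h2
  have hdlen : 2 ≤ d.length := by
    rcases Nat.lt_or_ge d.length 2 with h2 | h2
    · interval_cases h3 : d.length
      · exact absurd (Walk.eq_of_length_eq_zero h3).symm hne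
      · exfalso
        apply hedge'
        apply w'.edges_dropUntil_subset hv'
        rw [edges_eq_map d, h3]
        have e0 : d.getVert 0 = v := d.getVert_zero
        have e1 : d.getVert 1 = u := by
          have := d.getVert_length
          rwa [h3] at this
        rw [Sym2.eq_swap]
        simp [e0, e1]
    · exact h2
  refine ⟨u, t.append (Walk.cons hadj.symm Walk.nil), Walk.cons hadj d, ?_, ?_, ?_, ?_, ?_⟩
  · rw [Walk.length_append, Walk.length_cons, Walk.length_nil]
    omega
  · rw [Walk.length_cons]
    omega
  · intro z hz
    rw [Walk.mem_support_append_iff] at hz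
    rcases hz with hz | hz
    · exact hw'sub z (w'.support_takeUntil_subset hv' hz)
    · rw [Walk.support_cons, Walk.support_nil] at hz
      rcases List.mem_cons.mp hz with hz | hz
      · rw [hz]; exact hv
      · simp at hz
        rw [hz]; exact hu
  · intro z hz
    rw [Walk.support_cons] at hz
    rcases List.mem_cons.mp hz with hz | hz
    · rw [hz]; exact hu
    · exact hw'sub z (w'.support_dropUntil_subset hv' hz)
  · have hwr : wind p w' = wind p t + wind p d := by
      conv_lhs => rw [← hspec]
      rw [wind_append]
    rw [wind_append, wind_cons, wind_cons, wind_nil, ← hwindw', hwr,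
      stp_antisymm hm p v u]
    ring

lemma core {m : ℕ} (hm : 3 ≤ m) (p : W → ZMod m) (U : Set W)
    (hp : ∀ u v, u ∈ U → v ∈ U → G.Adj u v →
      p v - p u = 1 ∨ p v - p u = -1 ∨ p v - p u = 0) :
    ∀ (n : ℕ) (a : W) (w : G.Walk a a), w.length ≤ n → (∀ z ∈ w.support, z ∈ U) →
      wind p w ≠ 0 → ∃ k, m ≤ k ∧ Nonempty (SimpleGraph.cycleGraph k ↪g G) := by
  intro n
  induction n with
  | zero =>
    intro a w hlen hU hwind
    exfalso
    apply hwind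
    have habs := abs_wind_le_length p w
    have : (w.length : ℤ) ≤ 0 := by exact_mod_cast hlen
    have : |wind p w| ≤ 0 := le_trans habs this
    exact abs_eq_zero.mp (le_antisymm this (abs_nonneg _))
  | succ n ih =>
    intro a w hlen hU hwind
    have hmlen : m ≤ w.length := by
      have hcast := cast_wind hm p w (fun x y hx hy hadj => hp x y (hU x hx) (hU y hy) hadj)
      rw [sub_self] at hcast
      have hdvd : (m : ℤ) ∣ wind p w := by
        rwa [ZMod.intCast_zmod_eq_zero_iff_dvd] at hcast
      have habs := abs_wind_le_length p w
      have hle : (m : ℤ) ≤ |wind p w| :=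
        Int.le_of_dvd (abs_pos.mpr hwind) ((dvd_abs _ _).mpr hdvd)
      exact_mod_cast le_trans hle habs
    by_cases hnd : w.support.tail.Nodup
    · by_cases hch : ∀ x y, x ∈ w.support → y ∈ w.support → G.Adj x y → s(x, y) ∈ w.edges
      · exact ⟨w.length, hmlen, embed_of_nodup_chordfree w (by omega) hnd hch⟩
      · push_neg at hch
        obtain ⟨x, y, hx, hy, hadj, hedge⟩ := hch
        obtain ⟨b, w₁, w₂, h1, h2, hs1, hs2, hw⟩ := split_chord hm p w hx hy hadj hedge
        have hone : wind p w₁ ≠ 0 ∨ wind p w₂ ≠ 0 := by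
          by_contra hc
          push_neg at hc
          rw [hc.1, hc.2] at hw
          exact hwind (by omega)
        rcases hone with h | h
        · exact ih b w₁ (by omega) (fun z hz => hU z (hs1 z hz)) h
        · exact ih b w₂ (by omega) (fun z hz => hU z (hs2 z hz)) h
    · obtain ⟨b, w₁, w₂, h1, h2, hs1, hs2, hw⟩ := split_dup p w hnd
      have hone : wind p w₁ ≠ 0 ∨ wind p w₂ ≠ 0 := by
        by_contra hc
        push_neg at hc
        rw [hc.1, hc.2] at hw
        exact hwind (by omega)
      rcases hone with h | h
      · exact ih b w₁ (by omega) (fun z hz => hU z (hs1 z hz)) h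
      · exact ih b w₂ (by omega) (fun z hz => hU z (hs2 z hz)) h


end IndCyc

namespace IndCyc2
open IndCyc

variable {V : Type} {H : SimpleGraph V}

lemma walk_of_reach (O : GraphOrientation H) {u z : V}
    (h : Relation.ReflTransGen O.D u z) :
    ∃ w : H.Walk u z, ∀ y ∈ w.support,
      Relation.ReflTransGen O.D u y ∧ Relation.ReflTransGen O.D y z := by
  induction h with
  | refl =>
    exact ⟨SimpleGraph.Walk.nil, fun y hy => by
      simp only [SimpleGraph.Walk.support_nil, List.mem_singleton] at hy
      subst hy
      exact ⟨Relation.ReflTransGen.refl, Relation.ReflTransGen.refl⟩⟩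
  | @tail b c hub hbc ih =>
    obtain ⟨w, hw⟩ := ih
    refine ⟨w.concat (O.adj_of_rel b c hbc), ?_⟩
    intro y hy
    rw [SimpleGraph.Walk.support_concat] at hy
    rw [List.mem_append] at hy
    simp only [List.mem_singleton] at hy
    rcases hy with hy | hy
    · obtain ⟨h1, h2⟩ := hw y hy
      exact ⟨h1, h2.tail hbc⟩
    · rw [hy]
      exact ⟨hub.tail hbc, Relation.ReflTransGen.refl⟩

/-- Position of the `i`-th source on the subdivided cycle. -/
def epos {ℓ : ℕ} (i : ZMod ℓ) : ZMod (2 * ℓ) := ((2 * i.val : ℕ) : ZMod (2 * ℓ))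

open scoped Classical in
/-- The cyclic potential function. -/
noncomputable def pot {ℓ : ℕ} (O : GraphOrientation H) (S : ZMod ℓ → V) (v : V) :
    ZMod (2 * ℓ) :=
  if h : ∃ i : ZMod ℓ, v ∈ O.reach (S i) ∧ v ∈ O.reach (S (i + 1)) then epos h.choose + 1
  else if h' : ∃ i : ZMod ℓ, v ∈ O.reach (S i) then epos h'.choose else 0

section
variable {ℓ : ℕ} (hl : 3 ≤ ℓ)
include hl

lemma epos_succ (i : ZMod ℓ) : epos (i + 1) = epos i + 2 := by
  haveI : NeZero ℓ := ⟨by omega⟩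
  haveI : Fact (1 < ℓ) := ⟨by omega⟩
  have hval : (i + 1).val = (i.val + 1) % ℓ := by
    rw [ZMod.val_add, ZMod.val_one]
  have hlt := i.val_lt
  rcases Nat.lt_or_ge (i.val + 1) ℓ with h | h
  · rw [epos, hval, Nat.mod_eq_of_lt h, epos]
    push_cast
    ring
  · have he : i.val + 1 = ℓ := by omega
    rw [epos, hval, he, Nat.mod_self, epos]
    have h2 : ((2 * i.val : ℕ) : ZMod (2 * ℓ)) + 2 = ((2 * ℓ : ℕ) : ZMod (2 * ℓ)) := by
      have : (2 * ℓ : ℕ) = 2 * i.val + 2 := by omega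
      rw [this]
      push_cast
      ring
    rw [h2, ZMod.natCast_self]
    simp

lemma epos_inj {i j : ZMod ℓ} (h : epos i = epos j) : i = j := by
  haveI : NeZero ℓ := ⟨by omega⟩
  have := natCast_inj_of_lt (m := 2 * ℓ) (by have := i.val_lt; omega)
    (by have := j.val_lt; omega) h
  exact ZMod.val_injective ℓ (by omega)

lemma epos_ne_odd (i j : ZMod ℓ) : epos i ≠ epos j + 1 := by
  haveI : NeZero ℓ := ⟨by omega⟩
  intro h
  have h' : ((2 * i.val : ℕ) : ZMod (2 * ℓ)) = ((2 * j.val + 1 : ℕ) : ZMod (2 * ℓ)) := by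
    rw [epos, epos] at h
    push_cast at h ⊢
    linear_combination h
  have := natCast_inj_of_lt (m := 2 * ℓ) (by have := i.val_lt; omega)
    (by have := j.val_lt; omega) h'
  omega

lemma pot_eq_pair (O : GraphOrientation H) (S : ZMod ℓ → V) {v : V} (i : ZMod ℓ)
    (h1 : v ∈ O.reach (S i)) (h2 : v ∈ O.reach (S (i + 1)))
    (hu : ∀ j, v ∈ O.reach (S j) → j = i ∨ j = i + 1) :
    pot O S v = epos i + 1 := by
  classical
  have hex : ∃ k : ZMod ℓ, v ∈ O.reach (S k) ∧ v ∈ O.reach (S (k + 1)) := ⟨i, h1, h2⟩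
  rw [pot, dif_pos hex]
  congr 1
  apply congrArg
  obtain ⟨hc1, hc2⟩ := hex.choose_spec
  rcases hu _ hc1 with h | h
  · exact h
  · exfalso
    rcases hu _ hc2 with h' | h'
    · rw [h] at h'
      have : (2 : ZMod ℓ) = 0 := by linear_combination h'
      exact two_ne_zero' hl this
    · rw [h] at h'
      have : (1 : ZMod ℓ) = 0 := by linear_combination h'
      exact one_ne_zero' hl this

lemma pot_eq_single (O : GraphOrientation H) (S : ZMod ℓ → V) {v : V} (i : ZMod ℓ)
    (h1 : v ∈ O.reach (S i)) (hu : ∀ j, v ∈ O.reach (S j) → j = i) :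
    pot O S v = epos i := by
  classical
  have hnex : ¬ ∃ k : ZMod ℓ, v ∈ O.reach (S k) ∧ v ∈ O.reach (S (k + 1)) := by
    rintro ⟨k, hk1, hk2⟩
    have e1 := hu _ hk1
    have e2 := hu _ hk2
    rw [e1] at e2
    have : (1 : ZMod ℓ) = 0 := by linear_combination e2
    exact one_ne_zero' hl this
  have hex : ∃ k : ZMod ℓ, v ∈ O.reach (S k) := ⟨i, h1⟩
  rw [pot, dif_neg hnex, dif_pos hex]
  exact congrArg _ (hu _ hex.choose_spec)

end
end IndCyc2
/-- If the unique reachability graph over a subset `Sp` of the sources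
of an acyclic orientation of `H` contains a cycle of length `ℓ ≥ 3`, then `H`
contains an induced cycle of length at least `2ℓ`. -/
theorem hasInducedCycle_of_urGraph_cycle {V : Type} [Fintype V] (H : SimpleGraph V)
    (O : GraphOrientation H) (Sp : Set V) (hSp : Sp ⊆ O.sources)
    (ℓ : ℕ) (hℓ : 3 ≤ ℓ) (s : V) (c : (URGraph O Sp).Walk s s)
    (hc : c.IsCycle) (hlen : c.length = ℓ) :
    ∃ n : ℕ, 2 * ℓ ≤ n ∧ HasInducedCycleOfLength H n := by
  classical
  haveI : NeZero ℓ := ⟨by omega⟩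
  haveI : Fact (1 < ℓ) := ⟨by omega⟩
  have hm6 : 3 ≤ 2 * ℓ := by omega
  set S : ZMod ℓ → V := fun i => c.getVert i.val with hSdef
  have hadjS : ∀ i : ZMod ℓ, (URGraph O Sp).Adj (S i) (S (i + 1)) := by
    intro i
    have hval : (i + 1).val = (i.val + 1) % ℓ := by rw [ZMod.val_add, ZMod.val_one]
    have hilt : i.val < ℓ := i.val_lt
    show (URGraph O Sp).Adj (c.getVert i.val) (c.getVert (i + 1).val)
    rcases Nat.lt_or_ge (i.val + 1) ℓ with hlt | hge
    · have hv : (i + 1).val = i.val + 1 := by rw [hval, Nat.mod_eq_of_lt hlt]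
      rw [hv]
      exact c.adj_getVert_succ (by omega)
    · have hv1 : (i + 1).val = 0 := by
        have he : i.val + 1 = ℓ := by omega
        rw [hval, he, Nat.mod_self]
      have hadj := c.adj_getVert_succ (show i.val < c.length by omega)
      have heq : c.getVert (i.val + 1) = c.getVert ((i + 1 : ZMod ℓ)).val := by
        rw [hv1, c.getVert_zero]
        have he : i.val + 1 = c.length := by omega
        rw [he, c.getVert_length]
      rwa [heq] at hadj
  have hgetinj : ∀ i j : ℕ, i < c.length → j < c.length → c.getVert i = c.getVert j →
      i = j := fun i j hi hj hij => IndCyc.getVert_inj c hc.support_nodup hi hj hij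
  have hSinj : Function.Injective S := by
    intro i j hij
    have h1 : i.val = j.val :=
      hgetinj i.val j.val (by rw [hlen]; exact i.val_lt) (by rw [hlen]; exact j.val_lt) hij
    exact ZMod.val_injective ℓ h1
  have hSmem : ∀ i, S i ∈ Sp := fun i => (hadjS i).1
  have hxex : ∀ i : ZMod ℓ, ∃ z, z ∈ O.reach (S i) ∧ z ∈ O.reach (S (i + 1)) ∧
      z ∉ O.reachSet (Sp \ {S i, S (i + 1)}) := by
    intro i
    obtain ⟨-, -, -, z, hz⟩ := hadjS i
    exact ⟨z, hz.1.1, hz.1.2, hz.2⟩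
  choose x hx1 hx2 hx3 using hxex
  have hone : (1 : ZMod ℓ) ≠ 0 := IndCyc.one_ne_zero' hℓ
  have htwo : (2 : ZMod ℓ) ≠ 0 := IndCyc.two_ne_zero' hℓ
  have hkey : ∀ (i : ZMod ℓ) (z : V), Relation.ReflTransGen O.D z (x i) →
      ∀ j : ZMod ℓ, z ∈ O.reach (S j) → j = i ∨ j = i + 1 := by
    intro i z hz j hj
    by_contra hcon
    push_neg at hcon
    apply hx3 i
    have hSjmem : S j ∈ Sp \ {S i, S (i + 1)} := by
      refine ⟨hSmem j, ?_⟩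
      intro hmem
      rcases hmem with hmem | hmem
      · exact hcon.1 (hSinj hmem)
      · exact hcon.2 (hSinj hmem)
    exact Set.mem_biUnion hSjmem (hj.trans hz)
  have hsrc : ∀ i j : ZMod ℓ, S i ∈ O.reach (S j) → j = i := by
    intro i j h
    rcases Relation.ReflTransGen.cases_tail h with he | ⟨y, -, hy⟩
    · exact (hSinj he).symm
    · exact absurd hy (hSp (hSmem i) y)
  set p : V → ZMod (2 * ℓ) := IndCyc2.pot O S with hpdef
  set U : Set V := {v | ∃ i : ZMod ℓ, Relation.ReflTransGen O.D v (x i) ∧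
      (v ∈ O.reach (S i) ∨ v ∈ O.reach (S (i + 1)))} with hUdef
  have hclass : ∀ v ∈ U,
      (∃ j, v ∈ O.reach (S j) ∧ p v = IndCyc2.epos j ∧ ∀ k, v ∈ O.reach (S k) → k = j) ∨
      (∃ j, v ∈ O.reach (S j) ∧ v ∈ O.reach (S (j + 1)) ∧ p v = IndCyc2.epos j + 1 ∧
        ∀ k, v ∈ O.reach (S k) → k = j ∨ k = j + 1) := by
    intro v hv
    rw [hUdef, Set.mem_setOf_eq] at hv
    obtain ⟨i, hvx, hvr⟩ := hv
    have huz := hkey i v hvx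
    by_cases hb1 : v ∈ O.reach (S i)
    · by_cases hb2 : v ∈ O.reach (S (i + 1))
      · exact Or.inr ⟨i, hb1, hb2, IndCyc2.pot_eq_pair hℓ O S i hb1 hb2 huz, huz⟩
      · refine Or.inl ⟨i, hb1, IndCyc2.pot_eq_single hℓ O S i hb1 ?_, ?_⟩ <;>
          · intro k hk
            refine (huz k hk).resolve_right (fun he => hb2 ?_)
            rw [← he]; exact hk
    · have hb2 : v ∈ O.reach (S (i + 1)) := hvr.resolve_left hb1
      refine Or.inl ⟨i + 1, hb2, IndCyc2.pot_eq_single hℓ O S (i + 1) hb2 ?_, ?_⟩ <;>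
        · intro k hk
          refine (huz k hk).resolve_left (fun he => hb1 ?_)
          rw [← he]; exact hk
  have hpD : ∀ u v, u ∈ U → v ∈ U → O.D u v →
      (p v - p u = 1 ∨ p v - p u = -1 ∨ p v - p u = 0) := by
    intro u v hu hv hd
    have htrans : ∀ k : ZMod ℓ, u ∈ O.reach (S k) → v ∈ O.reach (S k) :=
      fun k hk => hk.trans (Relation.ReflTransGen.single hd)
    rcases hclass u hu with ⟨j, hju, hpu, hju'⟩ | ⟨j, hju, hju2, hpu, hju'⟩ <;>
      rcases hclass v hv with ⟨j', hjv, hpv, hjv'⟩ | ⟨j', hjv, hjv2, hpv, hjv'⟩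
    · have he : j = j' := hjv' j (htrans j hju)
      right; right
      rw [hpu, hpv, he]
      ring
    · rcases hjv' j (htrans j hju) with he | he
      · left
        rw [hpu, hpv, he]
        ring
      · right; left
        rw [hpu, hpv, he, IndCyc2.epos_succ hℓ]
        ring
    · exfalso
      have e1 : j = j' := hjv' j (htrans j hju)
      have e2 : j + 1 = j' := hjv' (j + 1) (htrans (j + 1) hju2)
      rw [← e1] at e2
      exact hone (by linear_combination e2)
    · rcases hjv' j (htrans j hju) with he | he
      · right; right
        rw [hpu, hpv, he]
        ring
      · exfalso
        rcases hjv' (j + 1) (htrans (j + 1) hju2) with he2 | he2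
        · rw [he] at he2
          exact htwo (by linear_combination he2)
        · rw [he] at he2
          exact hone (by linear_combination he2)
  have hp : ∀ u v, u ∈ U → v ∈ U → H.Adj u v →
      (p v - p u = 1 ∨ p v - p u = -1 ∨ p v - p u = 0) := by
    intro u v hu hv hadj
    rcases O.rel_of_adj u v hadj with hd | hd
    · exact hpD u v hu hv hd
    · rcases hpD v u hv hu hd with h | h | h
      · right; left; linear_combination -h
      · left; linear_combination -h
      · right; right; linear_combination -h
  have hpxi : ∀ i, p (x i) = IndCyc2.epos i + 1 := fun i =>
    IndCyc2.pot_eq_pair hℓ O S i (hx1 i) (hx2 i)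
      (hkey i (x i) Relation.ReflTransGen.refl)
  have hpSi : ∀ i, p (S i) = IndCyc2.epos i := fun i =>
    IndCyc2.pot_eq_single hℓ O S i Relation.ReflTransGen.refl (fun k => hsrc i k)
  have heodd : ∀ i j : ZMod ℓ, IndCyc2.epos i ≠ IndCyc2.epos j + 1 :=
    fun i j => IndCyc2.epos_ne_odd hℓ i j
  have hchain : ∀ i : ZMod ℓ, ∃ w : H.Walk (S i) (S (i + 1)),
      (∀ z ∈ w.support, z ∈ U) ∧ IndCyc.wind p w = 2 := by
    intro i
    obtain ⟨wP, hwP⟩ := IndCyc2.walk_of_reach O (hx1 i)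
    obtain ⟨wQ, hwQ⟩ := IndCyc2.walk_of_reach O (hx2 i)
    have hPU : ∀ z ∈ wP.support, z ∈ U := by
      intro z hz
      rw [hUdef, Set.mem_setOf_eq]
      exact ⟨i, (hwP z hz).2, Or.inl (hwP z hz).1⟩
    have hQU : ∀ z ∈ wQ.support, z ∈ U := by
      intro z hz
      rw [hUdef, Set.mem_setOf_eq]
      exact ⟨i, (hwQ z hz).2, Or.inr (hwQ z hz).1⟩
    have hwindP : IndCyc.wind p wP = 1 := by
      have hsup : ∀ z ∈ wP.support, p z = IndCyc2.epos i ∨ p z = IndCyc2.epos i + 1 := by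
        intro z hz
        obtain ⟨hz1, hz2⟩ := hwP z hz
        have huz := hkey i z hz2
        by_cases hb : z ∈ O.reach (S (i + 1))
        · exact Or.inr (IndCyc2.pot_eq_pair hℓ O S i hz1 hb huz)
        · refine Or.inl (IndCyc2.pot_eq_single hℓ O S i hz1 ?_)
          intro k hk
          refine (huz k hk).resolve_right (fun he => hb ?_)
          rw [← he]; exact hk
      have hif1 : (if p (x i) = IndCyc2.epos i + 1 then (1 : ℤ) else 0) = 1 :=
        if_pos (hpxi i)
      have hif2 : (if p (S i) = IndCyc2.epos i + 1 then (1 : ℤ) else 0) = 0 :=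
        if_neg (by rw [hpSi i]; exact heodd i i)
      rw [IndCyc.wind_two_levels hm6 p (IndCyc2.epos i) wP hsup, hif1, hif2]
      norm_num
    have hwindQ : IndCyc.wind p wQ = -1 := by
      have hsup : ∀ z ∈ wQ.support,
          p z = IndCyc2.epos i + 1 ∨ p z = (IndCyc2.epos i + 1) + 1 := by
        intro z hz
        obtain ⟨hz1, hz2⟩ := hwQ z hz
        have huz := hkey i z hz2
        by_cases hb : z ∈ O.reach (S i)
        · exact Or.inl (IndCyc2.pot_eq_pair hℓ O S i hb hz1 huz)
        · refine Or.inr ?_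
          have hps : p z = IndCyc2.epos (i + 1) := by
            refine IndCyc2.pot_eq_single hℓ O S (i + 1) hz1 ?_
            intro k hk
            refine (huz k hk).resolve_left (fun he => hb ?_)
            rw [← he]; exact hk
          rw [hps, IndCyc2.epos_succ hℓ]
          ring
      have hif1 : (if p (x i) = (IndCyc2.epos i + 1) + 1 then (1 : ℤ) else 0) = 0 :=
        if_neg (by
          rw [hpxi i]
          intro hcon
          exact IndCyc.one_ne_zero' hm6 (by linear_combination -hcon))
      have hif2 : (if p (S (i + 1)) = (IndCyc2.epos i + 1) + 1 then (1 : ℤ) else 0) = 1 :=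
        if_pos (by rw [hpSi (i + 1), IndCyc2.epos_succ hℓ]; ring)
      rw [IndCyc.wind_two_levels hm6 p (IndCyc2.epos i + 1) wQ hsup, hif1, hif2]
      ring
    refine ⟨wP.append wQ.reverse, ?_, ?_⟩
    · intro z hz
      rw [SimpleGraph.Walk.mem_support_append_iff] at hz
      rcases hz with hz | hz
      · exact hPU z hz
      · rw [SimpleGraph.Walk.support_reverse, List.mem_reverse] at hz
        exact hQU z hz
    · rw [IndCyc.wind_append, IndCyc.wind_reverse hm6, hwindP, hwindQ]
      ring
  choose ch hch1 hch2 using hchain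
  have hbig : ∀ k : ℕ, ∃ w : H.Walk (S 0) (S (k : ZMod ℓ)),
      (∀ z ∈ w.support, z ∈ U) ∧ IndCyc.wind p w = 2 * k := by
    intro k
    induction k with
    | zero =>
      refine ⟨(SimpleGraph.Walk.nil : H.Walk (S 0) (S 0)).copy rfl (by norm_num), ?_, ?_⟩
      · intro z hz
        rw [SimpleGraph.Walk.support_copy, SimpleGraph.Walk.support_nil,
          List.mem_singleton] at hz
        rw [hz, hUdef, Set.mem_setOf_eq]
        exact ⟨0, hx1 0, Or.inl Relation.ReflTransGen.refl⟩
      · rw [IndCyc.wind_copy]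
        simp
    | succ k ih =>
      obtain ⟨w, hw1, hw2⟩ := ih
      have hcast : S ((k : ZMod ℓ) + 1) = S (((k + 1 : ℕ) : ZMod ℓ)) := by
        congr 1
        push_cast
        ring
      refine ⟨w.append ((ch (k : ZMod ℓ)).copy rfl hcast), ?_, ?_⟩
      · intro z hz
        rw [SimpleGraph.Walk.mem_support_append_iff] at hz
        rcases hz with hz | hz
        · exact hw1 z hz
        · rw [SimpleGraph.Walk.support_copy] at hz
          exact hch1 (k : ZMod ℓ) z hz
      · rw [IndCyc.wind_append, IndCyc.wind_copy, hw2, hch2]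
        push_cast
        ring
  obtain ⟨w0, hw01, hw02⟩ := hbig ℓ
  have hcast0 : S ((ℓ : ℕ) : ZMod ℓ) = S 0 := by
    congr 1
    exact ZMod.natCast_self ℓ
  set w : H.Walk (S 0) (S 0) := w0.copy rfl hcast0 with hwdef
  have hwsup : ∀ z ∈ w.support, z ∈ U := by
    intro z hz
    rw [hwdef, SimpleGraph.Walk.support_copy] at hz
    exact hw01 z hz
  have hwwind : IndCyc.wind p w ≠ 0 := by
    rw [hwdef, IndCyc.wind_copy, hw02]
    have : (3 : ℤ) ≤ (ℓ : ℤ) := by exact_mod_cast hℓ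
    omega
  obtain ⟨k, hk, hemb⟩ := IndCyc.core hm6 p U hp w.length (S 0) w le_rfl hwsup hwwind
  exact ⟨k, hk, hemb⟩
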